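/- For every integer n ≥ 2, consider the 2×2 contingency tables D with entries o₁₁ = 0, o₁₂ = 1, o₂₁ = n − 1, o₂₂ = 0 (total n), and D′ with entries o′₁₁ = 1, o′₁₂ = 1, o′₂₁ = n − 1, o′₂₂ = 0 (total n + 1), where D′ is obtained from D by adding one tuple to cell (1,1). Then χ²(D) = n, χ²(D′) = (n² − 1)/(2n), and hence χ²(D) − χ²(D′) = (n² + 1)/(2n). Consequently the global sensitivity of the χ² correlation statistic of a contingency table with m rows and 2 columns under addition of one tuple is at least (n² + 1)/(2n), where n is the number of tuples. -/

import Mathlib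

open Finset

/-- The Pearson χ² statistic of an `m × k` contingency table `o`:
`χ² = Σ_{i,j} (o_{ij} − e_{ij})² / e_{ij}` with `e_{ij} = R_i·C_j/N`. -/
noncomputable def chiSq {m k : ℕ} (o : Fin m → Fin k → ℝ) : ℝ :=
  ∑ i : Fin m, ∑ j : Fin k,
    (o i j - (∑ j' : Fin k, o i j') * (∑ i' : Fin m, o i' j) /
        (∑ i' : Fin m, ∑ j' : Fin k, o i' j')) ^ 2 /
      ((∑ j' : Fin k, o i j') * (∑ i' : Fin m, o i' j) /
        (∑ i' : Fin m, ∑ j' : Fin k, o i' j'))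

/-- For `n ≥ 2`, the table `D = [[0, 1], [n−1, 0]]` (total `n`) and its neighbor
`D′ = [[1, 1], [n−1, 0]]` (obtained by adding one tuple to cell (1,1), total `n+1`)
satisfy `χ²(D) = n`, `χ²(D′) = (n² − 1)/(2n)`, and `χ²(D) − χ²(D′) = (n² + 1)/(2n)`;
hence the global sensitivity of the χ² statistic is at least `(n² + 1)/(2n)`. -/
theorem chiSq_sensitivity_lower_bound (n : ℕ) (hn : 2 ≤ n) :
    chiSq (![![(0 : ℝ), 1], ![(n : ℝ) - 1, 0]]) = (n : ℝ) ∧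
    chiSq (![![(1 : ℝ), 1], ![(n : ℝ) - 1, 0]]) = ((n : ℝ) ^ 2 - 1) / (2 * n) ∧
    chiSq (![![(0 : ℝ), 1], ![(n : ℝ) - 1, 0]])
        - chiSq (![![(1 : ℝ), 1], ![(n : ℝ) - 1, 0]]) = ((n : ℝ) ^ 2 + 1) / (2 * n) := by
  have h2 : (2:ℝ) ≤ (n:ℝ) := by exact_mod_cast hn
  have h0 : (n:ℝ) ≠ 0 := by linarith
  have h1 : (n:ℝ) - 1 ≠ 0 := by linarith
  have h3 : (n:ℝ) + 1 ≠ 0 := by linarith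
  have hA : chiSq (![![(0 : ℝ), 1], ![(n : ℝ) - 1, 0]]) = (n : ℝ) := by
    simp only [chiSq, Fin.sum_univ_two, Matrix.cons_val', Matrix.cons_val_zero,
      Matrix.cons_val_one, Matrix.head_cons, Matrix.empty_val', Matrix.cons_val_fin_one,
      Matrix.head_fin_const]
    simp only [add_zero, zero_add, show (1:ℝ) + ((n:ℝ) - 1) = n by ring,
      show (1:ℝ) + 1 + ((n:ℝ) - 1) = n + 1 by ring]
    field_simp
    ring
  have hB : chiSq (![![(1 : ℝ), 1], ![(n : ℝ) - 1, 0]]) = ((n : ℝ) ^ 2 - 1) / (2 * n) := by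
    simp only [chiSq, Fin.sum_univ_two, Matrix.cons_val', Matrix.cons_val_zero,
      Matrix.cons_val_one, Matrix.head_cons, Matrix.empty_val', Matrix.cons_val_fin_one,
      Matrix.head_fin_const]
    simp only [add_zero, zero_add, show (1:ℝ) + ((n:ℝ) - 1) = n by ring,
      show (1:ℝ) + 1 + ((n:ℝ) - 1) = n + 1 by ring]
    field_simp
    ring
  refine ⟨hA, hB, ?_⟩
  rw [hA, hB]
  field_simp
  ring
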